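/- Let a be a positive bounded linear operator on a complex Hilbert space H with infinite spectrum (equivalently, f_m(a) ≠ 0 for all m). Then for every m ≥ 0 one has ‖a − a·p_m(a)·a‖ ≤ ‖f_{m+1}(a)‖ / (∏_{k=0}^{m} ‖f_k(a)‖) ≤ (1/4^{m+1})·‖a‖; consequently the sequence (a·p_m(a)·a) converges in operator norm to a. -/

import Mathlib

set_option synthInstance.maxHeartbeats 1000000
set_option maxHeartbeats 1000000


section Sequences

variable {A : Type*} [CStarAlgebra A]

/-- The sequence `f₀(a) = a`, `f_{m+1}(a) = f_m(a)·(‖f_m(a)‖·1 − f_m(a))`. -/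
noncomputable def fSeq (a : A) : ℕ → A
  | 0 => a
  | m + 1 => fSeq a m * (‖fSeq a m‖ • (1 : A) - fSeq a m)

/-- The sequence `g_m(a) = ‖f_m(a)‖·1 − f_m(a)`. -/
noncomputable def gSeq (a : A) (m : ℕ) : A := ‖fSeq a m‖ • (1 : A) - fSeq a m

open Classical in
/-- The sequence `p_m(a)`: as long as `f_m(a) ≠ 0`,
`p_m(a) = (1/‖f₀(a)‖)·1 + Σ_{l=1}^m (∏_{k=0}^{l-1} g_k(a)²)/(∏_{k=0}^{l} ‖f_k(a)‖)`,
and `p_j(a) = p_M(a)` for `j > M`, where `M` is the last index with `f_M(a) ≠ 0`. -/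
noncomputable def pSeq (a : A) : ℕ → A
  | 0 => ‖a‖⁻¹ • (1 : A)
  | m + 1 =>
    if fSeq a (m + 1) = 0 then pSeq a m
    else pSeq a m +
      (((List.range (m + 2)).map fun k => ‖fSeq a k‖).prod)⁻¹ •
        ((List.range (m + 1)).map fun k => gSeq a k ^ 2).prod

lemma commute_fSeq (a x : A) (hx : Commute x a) : ∀ k, Commute x (fSeq a k)
  | 0 => hx
  | k + 1 => (commute_fSeq a x hx k).mul_right
      (((Commute.one_right x).smul_right _).sub_right (commute_fSeq a x hx k))

lemma commute_gSeq (a x : A) (hx : Commute x a) (k : ℕ) : Commute x (gSeq a k) :=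
  ((Commute.one_right x).smul_right _).sub_right (commute_fSeq a x hx k)

lemma fSeq_eq_mul_prod (a : A) : ∀ m : ℕ,
    fSeq a (m + 1) = a * ((List.range (m + 1)).map fun k => gSeq a k).prod
  | 0 => by simp [fSeq, gSeq, List.range_succ]
  | m + 1 => by
    have h1 : fSeq a (m + 2) = fSeq a (m + 1) * gSeq a (m + 1) := rfl
    rw [h1, fSeq_eq_mul_prod a m,
      show List.range (m + 1 + 1) = List.range (m + 1) ++ [m + 1] from List.range_succ (n := m + 1),
      List.map_append, List.prod_append]
    simp [mul_assoc]

end Sequences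

section OpAux

variable {H : Type*} [NormedAddCommGroup H] [InnerProductSpace ℂ H] [CompleteSpace H]
  [Nontrivial H]

lemma quad_image_infinite {s : Set ℝ} (hs : s.Infinite) (c : ℝ) :
    ((fun t : ℝ => t * (c - t)) '' s).Infinite := by
  intro hfin
  refine hs ?_
  have : s ⊆ ⋃ y ∈ (fun t : ℝ => t * (c - t)) '' s, {x : ℝ | x * (c - x) = y} := by
    intro x hx
    exact Set.mem_biUnion (Set.mem_image_of_mem _ hx) rfl
  refine Set.Finite.subset (Set.Finite.biUnion hfin fun y _ => ?_) this
  have hsub : {x : ℝ | x * (c - x) = y} ⊆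
      {x : ℝ | Polynomial.IsRoot (Polynomial.X ^ 2 - Polynomial.C c * Polynomial.X
        + Polynomial.C y) x} := by
    intro x hx
    simp only [Set.mem_setOf_eq] at hx ⊢
    simp only [Polynomial.IsRoot, Polynomial.eval_add, Polynomial.eval_sub,
      Polynomial.eval_pow, Polynomial.eval_mul, Polynomial.eval_X, Polynomial.eval_C]
    nlinarith
  refine Set.Finite.subset (Polynomial.finite_setOf_isRoot ?_) hsub
  intro h
  have := congrArg (fun p => Polynomial.coeff p 2) h
  simp [Polynomial.coeff_X_pow] at this

lemma step_lemma (b : H →L[ℂ] H) (hb : 0 ≤ b) (hsp : (spectrum ℝ b).Infinite) :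
    0 ≤ b * (‖b‖ • 1 - b) ∧ ‖b * (‖b‖ • 1 - b)‖ ≤ ‖b‖ ^ 2 / 4 ∧
      (spectrum ℝ (b * (‖b‖ • 1 - b))).Infinite := by
  have hsa : IsSelfAdjoint b := hb.isSelfAdjoint
  have hs0 : ∀ x ∈ spectrum ℝ b, 0 ≤ x := fun x hx => spectrum_nonneg_of_nonneg hb hx
  have hs1 : ∀ x ∈ spectrum ℝ b, x ≤ ‖b‖ := fun x hx => by
    have := spectrum.norm_le_norm_of_mem hx
    rwa [Real.norm_of_nonneg (hs0 x hx)] at this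
  have key : b * (‖b‖ • 1 - b) = cfc (fun t : ℝ => t * (‖b‖ - t)) b := by
    rw [cfc_mul _ _ b, cfc_sub _ _ b, cfc_const _ b, cfc_id' ℝ b,
      Algebra.algebraMap_eq_smul_one]
  refine ⟨?_, ?_, ?_⟩
  · rw [key]
    exact cfc_nonneg fun x hx => mul_nonneg (hs0 x hx) (by linarith [hs1 x hx])
  · rw [key]
    refine norm_cfc_le (by positivity) fun x hx => ?_
    rw [Real.norm_of_nonneg (mul_nonneg (hs0 x hx) (by linarith [hs1 x hx]))]
    nlinarith [hs0 x hx, hs1 x hx, sq_nonneg (x - ‖b‖ / 2)]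
  · rw [key, cfc_map_spectrum (fun t : ℝ => t * (‖b‖ - t)) b]
    exact quad_image_infinite hsp ‖b‖

end OpAux

open Filter in
/-- For a positive operator `a` with infinite spectrum,
`‖a − a·p_m(a)·a‖ ≤ ‖f_{m+1}(a)‖/(∏_{k=0}^m ‖f_k(a)‖) ≤ ‖a‖/4^{m+1}` for every `m`;
consequently `a·p_m(a)·a → a` in the operator norm. -/
theorem mul_pSeq_mul_tendsto_of_infinite_spectrum {H : Type*}
    [NormedAddCommGroup H] [InnerProductSpace ℂ H] [CompleteSpace H]
    (a : H →L[ℂ] H) (ha : 0 ≤ a) (hinf : (spectrum ℂ a).Infinite) :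
    (∀ m : ℕ,
      ‖a - a * pSeq a m * a‖ ≤
          ‖fSeq a (m + 1)‖ / ((List.range (m + 1)).map fun k => ‖fSeq a k‖).prod
        ∧ ‖fSeq a (m + 1)‖ / ((List.range (m + 1)).map fun k => ‖fSeq a k‖).prod ≤
            (1 / 4 ^ (m + 1)) * ‖a‖)
      ∧ Tendsto (fun m : ℕ => a * pSeq a m * a) atTop (nhds a) := by
  -- H is nontrivial
  have hnt : Nontrivial H := by
    by_contra h
    rw [not_nontrivial_iff_subsingleton] at h
    have hsub : Subsingleton (H →L[ℂ] H) := inferInstance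
    have : spectrum ℂ a = ∅ :=
      Set.eq_empty_iff_forall_notMem.mpr fun l hl =>
        (spectrum.mem_iff.mp hl) (isUnit_of_subsingleton _)
    exact absurd this (by simpa [Set.not_nonempty_iff_eq_empty] using hinf.nonempty.ne_empty)
  have hsa : IsSelfAdjoint a := ha.isSelfAdjoint
  have hspR : (spectrum ℝ a).Infinite := by
    have himg := hsa.spectrumRestricts.algebraMap_image
    rw [← himg] at hinf
    exact hinf.of_image _
  have main : ∀ m, 0 ≤ fSeq a m ∧ (spectrum ℝ (fSeq a m)).Infinite := by
    intro m
    induction m with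
    | zero => exact ⟨ha, hspR⟩
    | succ m ih =>
      obtain ⟨p1, _, p3⟩ := step_lemma (fSeq a m) ih.1 ih.2
      exact ⟨p1, p3⟩
  have hfnorm : ∀ m, ‖fSeq a (m + 1)‖ ≤ ‖fSeq a m‖ ^ 2 / 4 := fun m =>
    (step_lemma (fSeq a m) (main m).1 (main m).2).2.1
  have hne : ∀ m, fSeq a m ≠ 0 := by
    intro m h
    have h2 := (main m).2
    rw [h] at h2
    exact h2 (by rw [spectrum.zero_eq]; exact Set.finite_singleton 0)
  set N : ℕ → ℝ := fun m => ((List.range (m + 1)).map fun k => ‖fSeq a k‖).prod with hN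
  have hN0 : N 0 = ‖a‖ := by simp [hN, List.range_succ, fSeq]
  have hNsucc : ∀ m, N (m + 1) = N m * ‖fSeq a (m + 1)‖ := by
    intro m
    simp [hN, show List.range (m + 1 + 1) = List.range (m + 1) ++ [m + 1]
      from List.range_succ (n := m + 1)]
  have hNpos : ∀ m, 0 < N m := by
    intro m
    induction m with
    | zero => rw [hN0]; exact norm_pos_iff.mpr (hne 0)
    | succ m ih => rw [hNsucc]; exact mul_pos ih (norm_pos_iff.mpr (hne (m + 1)))
  -- products of gSeq
  set Q : ℕ → H →L[ℂ] H := fun m => ((List.range (m + 1)).map fun k => gSeq a k).prod with hQdef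
  have hcommQ : ∀ m x, Commute x a → Commute x (Q m) := by
    intro m x hx
    exact Commute.list_prod_right _ _ (by
      intro y hy
      simp only [List.mem_map] at hy
      obtain ⟨k, -, rfl⟩ := hy
      exact commute_gSeq a x hx k)
  have hQsq : ∀ m, ((List.range (m + 1)).map fun k => gSeq a k ^ 2).prod = Q m ^ 2 := by
    intro m
    induction m with
    | zero => simp [hQdef, List.range_succ]
    | succ m ih =>
      have hr : List.range (m + 1 + 1) = List.range (m + 1) ++ [m + 1] := List.range_succ (n := m + 1)
      have hc : Commute (Q m) (gSeq a (m + 1)) :=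
        (hcommQ m (gSeq a (m + 1)) ((commute_gSeq a a (Commute.refl a) (m + 1)).symm)).symm
      have hQs : Q (m + 1) = Q m * gSeq a (m + 1) := by
        simp only [hQdef, hr, List.map_append, List.prod_append, List.map_cons,
          List.map_nil, List.prod_cons, List.prod_nil, mul_one]
      rw [hr, List.map_append, List.prod_append, List.map_cons, List.map_nil,
        List.prod_cons, List.prod_nil, mul_one, ih, hQs, hc.mul_pow]
  have hfQ : ∀ m, fSeq a (m + 1) = a * Q m := fun m => fSeq_eq_mul_prod a m
  have key : ∀ m, a - a * pSeq a m * a = (N m)⁻¹ • fSeq a (m + 1) := by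
    intro m
    induction m with
    | zero =>
      have hna : ‖a‖ ≠ 0 := norm_ne_zero_iff.mpr (hne 0)
      show a - a * (‖a‖⁻¹ • 1) * a = _
      rw [hN0]
      have h1 : fSeq a 1 = a * (‖a‖ • (1 : H →L[ℂ] H) - a) := rfl
      rw [h1]
      simp only [mul_sub, smul_sub, mul_smul_comm, smul_mul_assoc, mul_one,
        smul_smul, inv_mul_cancel₀ hna, one_smul]
    | succ m ih =>
      have hp : pSeq a (m + 1) = pSeq a m +
          (N (m + 1))⁻¹ • ((List.range (m + 1)).map fun k => gSeq a k ^ 2).prod := by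
        simp [pSeq, hne (m + 1), hN]
      have hQa : a * Q m ^ 2 * a = fSeq a (m + 1) * fSeq a (m + 1) := by
        have hc : Q m * a = a * Q m := (hcommQ m a (Commute.refl a)).symm
        rw [sq, hfQ m]
        calc a * (Q m * Q m) * a = a * Q m * (Q m * a) := by simp only [mul_assoc]
        _ = a * Q m * (a * Q m) := by rw [hc]
      have expand : a * pSeq a (m + 1) * a =
          a * pSeq a m * a + (N (m + 1))⁻¹ • (fSeq a (m + 1) * fSeq a (m + 1)) := by
        rw [hp, mul_add, add_mul, mul_smul_comm, smul_mul_assoc, hQsq m, hQa]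
      rw [expand]
      have hfs : fSeq a (m + 2) =
          ‖fSeq a (m + 1)‖ • fSeq a (m + 1) - fSeq a (m + 1) * fSeq a (m + 1) := by
        show fSeq a (m + 1) * (‖fSeq a (m + 1)‖ • 1 - fSeq a (m + 1)) = _
        rw [mul_sub, mul_smul_comm, mul_one]
      have hNf : (N (m + 1))⁻¹ * ‖fSeq a (m + 1)‖ = (N m)⁻¹ := by
        rw [hNsucc m, mul_inv, mul_assoc,
          inv_mul_cancel₀ (norm_ne_zero_iff.mpr (hne (m + 1))), mul_one]
      rw [hfs, smul_sub, smul_smul, hNf, sub_add_eq_sub_sub, ih]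
  have heq : ∀ m, ‖a - a * pSeq a m * a‖ = ‖fSeq a (m + 1)‖ / N m := by
    intro m
    rw [key m, norm_smul, norm_inv, Real.norm_of_nonneg (hNpos m).le, div_eq_inv_mul]
  have bound2 : ∀ m, ‖fSeq a (m + 1)‖ / N m ≤ (1 / 4 ^ (m + 1)) * ‖a‖ := by
    intro m
    induction m with
    | zero =>
      rw [hN0, div_le_iff₀ (show (0 : ℝ) < ‖a‖ from norm_pos_iff.mpr (hne 0))]
      have hf0 := hfnorm 0
      rw [show fSeq a 0 = a from rfl] at hf0
      nlinarith [norm_nonneg a]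
    | succ m ih =>
      have hc : ‖fSeq a (m + 1)‖ ≠ 0 := norm_ne_zero_iff.mpr (hne (m + 1))
      have hN' : N m ≠ 0 := (hNpos m).ne'
      calc ‖fSeq a (m + 2)‖ / N (m + 1) ≤ (‖fSeq a (m + 1)‖ ^ 2 / 4) / N (m + 1) := by
            gcongr
            exacts [(hNpos (m + 1)).le, hfnorm (m + 1)]
        _ = (1 / 4) * (‖fSeq a (m + 1)‖ / N m) := by
            rw [hNsucc]
            field_simp
        _ ≤ (1 / 4) * ((1 / 4 ^ (m + 1)) * ‖a‖) :=
            mul_le_mul_of_nonneg_left ih (by norm_num)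
        _ = (1 / 4 ^ (m + 1 + 1)) * ‖a‖ := by ring
  refine ⟨fun m => ⟨(heq m).le, bound2 m⟩, ?_⟩
  rw [tendsto_iff_norm_sub_tendsto_zero]
  have h4 : Tendsto (fun m : ℕ => (1 / 4 : ℝ) ^ (m + 1) * ‖a‖) atTop (nhds 0) := by
    have ht := (tendsto_pow_atTop_nhds_zero_of_lt_one
      (by norm_num : (0 : ℝ) ≤ 1 / 4) (by norm_num : (1 / 4 : ℝ) < 1)).comp
      (tendsto_add_atTop_nat 1)
    simpa using ht.mul_const ‖a‖
  refine squeeze_zero (fun m => norm_nonneg _) (fun m => ?_) h4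
  rw [norm_sub_rev]
  calc ‖a - a * pSeq a m * a‖ = ‖fSeq a (m + 1)‖ / N m := heq m
    _ ≤ (1 / 4 ^ (m + 1)) * ‖a‖ := bound2 m
    _ = (1 / 4 : ℝ) ^ (m + 1) * ‖a‖ := by rw [div_pow, one_pow]
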